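/- The pressure-system matrix is symmetric positive definite: define A by Σ_j A_ij q_j = |ω_i| ( q_i/(ρ_i c_i² δt²) - ⟨div* (⟨∇q⟩/ρ)⟩_i ) where ⟨∇q⟩ is the discrete gradient and ⟨div*⟩ the negative-adjoint divergence. Then for all vectors φ, θ: Σ_{ij} φ_i A_ij θ_j = Σ_i (|ω_i|/ρ_i)( φ_i θ_i/(c_i δt)² + ⟨∇φ⟩_i · ⟨∇θ⟩_i ), hence A is symmetric and positive definite (assuming |ω_i|, ρ_i, c_i, δt > 0 and that ⟨∇·⟩ applied to constants is zero, with the quadratic form strictly positive since the mass term never vanishes for φ ≠ 0). -/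

import Mathlib

open scoped RealInnerProductSpace

/-- Discrete gradient of a scalar field on a Voronoi tessellation. -/
noncomputable def vGrad {N : ℕ} (x : Fin N → EuclideanSpace ℝ (Fin 2))
    (A : Fin N → ℝ) (Γ : Fin N → Fin N → ℝ)
    (m : Fin N → Fin N → EuclideanSpace ℝ (Fin 2))
    (q : Fin N → ℝ) (i : Fin N) : EuclideanSpace ℝ (Fin 2) :=
  -((A i)⁻¹) • ∑ j, ((Γ i j / dist (x i) (x j)) * (q i - q j)) • (m i j - x i)

/-- Negative-adjoint discrete divergence of a vector field. -/
noncomputable def vDivStar {N : ℕ} (x : Fin N → EuclideanSpace ℝ (Fin 2))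
    (A : Fin N → ℝ) (Γ : Fin N → Fin N → ℝ)
    (m : Fin N → Fin N → EuclideanSpace ℝ (Fin 2))
    (U : Fin N → EuclideanSpace ℝ (Fin 2)) (i : Fin N) : ℝ :=
  (A i)⁻¹ * ∑ j, (Γ i j / dist (x i) (x j)) *
    (⟪U i - U j, m i j - (2:ℝ)⁻¹ • (x i + x j)⟫ - ⟪(2:ℝ)⁻¹ • (U i + U j), x i - x j⟫)

/-- The pressure-system operator `(Aop q)_i = |ω_i|(q_i/(ρ_i c_i² δt²) - ⟨div*(⟨∇q⟩/ρ)⟩_i)`. -/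
noncomputable def Aop {N : ℕ} (x : Fin N → EuclideanSpace ℝ (Fin 2))
    (A ρ c : Fin N → ℝ) (δt : ℝ) (Γ : Fin N → Fin N → ℝ)
    (m : Fin N → Fin N → EuclideanSpace ℝ (Fin 2)) (q : Fin N → ℝ) (i : Fin N) : ℝ :=
  A i * (q i / (ρ i * (c i)^2 * δt^2)
    - vDivStar x A Γ m (fun j => (ρ j)⁻¹ • vGrad x A Γ m q j) i)

/-- The pressure-system matrix is symmetric positive definite: its quadratic form is
`∑_i (|ω_i|/ρ_i)(φ_i θ_i/(c_i δt)² + ⟨∇φ⟩_i · ⟨∇θ⟩_i)`, hence symmetric and, since the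
mass term never vanishes for `φ ≠ 0`, positive definite. -/
theorem pressure_matrix_spd {N : ℕ}
    (x : Fin N → EuclideanSpace ℝ (Fin 2))
    (A ρ c : Fin N → ℝ) (δt : ℝ)
    (hA : ∀ i, 0 < A i) (hρ : ∀ i, 0 < ρ i) (hc : ∀ i, 0 < c i) (hδt : 0 < δt)
    (Γ : Fin N → Fin N → ℝ) (hΓnn : ∀ i j, 0 ≤ Γ i j)
    (m : Fin N → Fin N → EuclideanSpace ℝ (Fin 2))
    -- duality between the discrete gradient and the negative-adjoint divergence
    (hdual : ∀ (φ : Fin N → ℝ) (U : Fin N → EuclideanSpace ℝ (Fin 2)),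
      (∑ i, A i * ⟪vGrad x A Γ m φ i, U i⟫)
        = -(∑ i, A i * φ i * vDivStar x A Γ m U i)) :
    (∀ φ θ : Fin N → ℝ,
      (∑ i, φ i * Aop x A ρ c δt Γ m θ i)
        = ∑ i, (A i / ρ i) * (φ i * θ i / (c i * δt)^2
            + ⟪vGrad x A Γ m φ i, vGrad x A Γ m θ i⟫)) ∧
    (∀ φ θ : Fin N → ℝ,
      (∑ i, φ i * Aop x A ρ c δt Γ m θ i) = ∑ i, θ i * Aop x A ρ c δt Γ m φ i) ∧
    (∀ φ : Fin N → ℝ, φ ≠ 0 → 0 < ∑ i, φ i * Aop x A ρ c δt Γ m φ i) := by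
  have key : ∀ φ θ : Fin N → ℝ,
      (∑ i, φ i * Aop x A ρ c δt Γ m θ i)
        = ∑ i, (A i / ρ i) * (φ i * θ i / (c i * δt)^2
            + ⟪vGrad x A Γ m φ i, vGrad x A Γ m θ i⟫) := by
    intro φ θ
    have hd := hdual φ (fun j => (ρ j)⁻¹ • vGrad x A Γ m θ j)
    have h1 : ∑ i, A i * φ i *
        vDivStar x A Γ m (fun j => (ρ j)⁻¹ • vGrad x A Γ m θ j) i
        = -∑ i, A i * ⟪vGrad x A Γ m φ i, (ρ i)⁻¹ • vGrad x A Γ m θ i⟫ := by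
      rw [hd]; ring
    calc ∑ i, φ i * Aop x A ρ c δt Γ m θ i
        = ∑ i, (A i * φ i * θ i / (ρ i * (c i)^2 * δt^2)
            - A i * φ i * vDivStar x A Γ m (fun j => (ρ j)⁻¹ • vGrad x A Γ m θ j) i) := by
          apply Finset.sum_congr rfl; intro i _
          simp only [Aop]; ring
      _ = (∑ i, A i * φ i * θ i / (ρ i * (c i)^2 * δt^2))
            - ∑ i, A i * φ i * vDivStar x A Γ m (fun j => (ρ j)⁻¹ • vGrad x A Γ m θ j) i := by
          rw [Finset.sum_sub_distrib]
      _ = (∑ i, A i * φ i * θ i / (ρ i * (c i)^2 * δt^2))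
            + ∑ i, A i * ⟪vGrad x A Γ m φ i, (ρ i)⁻¹ • vGrad x A Γ m θ i⟫ := by
          rw [h1]; ring
      _ = ∑ i, (A i / ρ i) * (φ i * θ i / (c i * δt)^2
            + ⟪vGrad x A Γ m φ i, vGrad x A Γ m θ i⟫) := by
          rw [← Finset.sum_add_distrib]
          apply Finset.sum_congr rfl; intro i _
          rw [real_inner_smul_right]
          have hρi := (hρ i).ne'
          have hci := (hc i).ne'
          have hδ := hδt.ne'
          field_simp
  refine ⟨key, ?_, ?_⟩
  · intro φ θ
    rw [key φ θ, key θ φ]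
    apply Finset.sum_congr rfl; intro i _
    rw [real_inner_comm]; ring
  · intro φ hφ
    rw [key φ φ]
    obtain ⟨i0, hi0⟩ : ∃ i, φ i ≠ 0 := by
      by_contra h; push_neg at h; exact hφ (funext h)
    have hterm : ∀ i, 0 ≤ (A i / ρ i) * (φ i * φ i / (c i * δt)^2
        + ⟪vGrad x A Γ m φ i, vGrad x A Γ m φ i⟫) := by
      intro i
      apply mul_nonneg (le_of_lt (div_pos (hA i) (hρ i)))
      apply add_nonneg
      · exact div_nonneg (mul_self_nonneg _) (sq_nonneg _)
      · exact real_inner_self_nonneg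
    apply Finset.sum_pos' (fun i _ => hterm i) ⟨i0, Finset.mem_univ i0, ?_⟩
    apply mul_pos (div_pos (hA i0) (hρ i0))
    have h1 : 0 < φ i0 * φ i0 / (c i0 * δt)^2 :=
      div_pos (mul_self_pos.mpr hi0) (pow_pos (mul_pos (hc i0) hδt) 2)
    have h2 : (0:ℝ) ≤ ⟪vGrad x A Γ m φ i0, vGrad x A Γ m φ i0⟫ := real_inner_self_nonneg
    linarith
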